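/- Let X be a block subspace and ℬ ⊆ E^∞, and suppose player I has a strategy in the infinite asymptotic game F_X to play in ℬ. Then for every sequence Δ = (δᵢ) of strictly positive reals there are finite intervals I₀ < I₁ < I₂ < ⋯ of ℕ (each interval lying entirely below the next) such that every block sequence (xᵢ) ∈ 𝔅(X) with the property that for all n there exists m with I₀ < xₙ < I_m < xₙ₊₁ (meaning max I₀ < min supp xₙ, max supp xₙ < min I_m, and max I_m < min supp xₙ₊₁) belongs to ℬ_Δ. -/

import Mathlib

section Defs

variable {𝔽 : Type} [Field 𝔽] {E : Type} [AddCommGroup E] [Module 𝔽 E]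

/-- The support of a vector with respect to the basis `b`. -/
noncomputable def supp (b : Module.Basis ℕ 𝔽 E) (x : E) : Finset ℕ :=
  (b.repr x).support

/-- `VecLt b x y` means `x < y`: every element of the support of `x` is smaller than
every element of the support of `y`. -/
def VecLt (b : Module.Basis ℕ 𝔽 E) (x y : E) : Prop :=
  ∀ m ∈ supp b x, ∀ n ∈ supp b y, m < n

/-- `NatLt b k x` means `k < x`: `k` is smaller than every element of the support of `x`. -/
def NatLt (b : Module.Basis ℕ 𝔽 E) (k : ℕ) (x : E) : Prop :=
  ∀ n ∈ supp b x, k < n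

/-- An infinite block sequence: a sequence of nonzero vectors with `x n < x (n + 1)`. -/
def IsBlockSeq (b : Module.Basis ℕ 𝔽 E) (x : ℕ → E) : Prop :=
  (∀ n, x n ≠ 0) ∧ ∀ n, VecLt b (x n) (x (n + 1))

/-- A finite block sequence: a list of nonzero vectors, consecutively increasing in the
block ordering. -/
def IsFinBlockSeq (b : Module.Basis ℕ 𝔽 E) (l : List E) : Prop :=
  (∀ x ∈ l, x ≠ 0) ∧ l.Chain' (VecLt b)

/-- A block subspace: a subspace spanned by an infinite block sequence. -/
def IsBlockSubspace (b : Module.Basis ℕ 𝔽 E) (X : Submodule 𝔽 E) : Prop :=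
  ∃ y : ℕ → E, IsBlockSeq b y ∧ X = Submodule.span 𝔽 (Set.range y)

/-- The list of the first `n` values of a sequence. -/
def hist {α : Type _} (x : ℕ → α) (n : ℕ) : List α :=
  List.ofFn (fun j : Fin n => x j)

/-- The concatenation of a finite prefix with an infinite sequence. -/
def prefCat {α : Type _} (l : List α) (x : ℕ → α) : ℕ → α := fun n =>
  if h : n < l.length then l.get ⟨n, h⟩ else x (n - l.length)

/-- Player II has a strategy in Gowers' game `G_X(pre)` below `X` to play in `A`:
player I plays infinite-dimensional subspaces `Y i ≤ X`, player II answers with a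
nonzero vector of `Y i`, the vectors played by II forming a block sequence, and the
outcome (the prefix `pre` followed by II's vectors) lies in `A`. -/
def IIWinsG (b : Module.Basis ℕ 𝔽 E) (X : Submodule 𝔽 E) (pre : List E) (A : Set (ℕ → E)) :
    Prop :=
  ∃ σ : List (Submodule 𝔽 E) → E,
    ∀ Y : ℕ → Submodule 𝔽 E,
      (∀ i, Y i ≤ X ∧ ¬FiniteDimensional 𝔽 ↥(Y i)) →
      (∀ i, σ (hist Y (i + 1)) ∈ Y i ∧ σ (hist Y (i + 1)) ≠ 0 ∧
          VecLt b (σ (hist Y (i + 1))) (σ (hist Y (i + 2)))) ∧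
        prefCat pre (fun i => σ (hist Y (i + 1))) ∈ A

/-- Player I has a strategy in the infinite asymptotic game `F_X(pre)` below `X` to play
in `A`: player I plays strictly increasing natural numbers `n i`, player II answers with
nonzero vectors of `X` with `n i < x i` forming a block sequence, and the outcome
(the prefix `pre` followed by II's vectors) lies in `A`. -/
def IWinsF (b : Module.Basis ℕ 𝔽 E) (X : Submodule 𝔽 E) (pre : List E) (A : Set (ℕ → E)) :
    Prop :=
  ∃ σ : List E → ℕ,
    ∀ x : ℕ → E,
      (∀ i, x i ∈ X ∧ x i ≠ 0 ∧ NatLt b (σ (hist x i)) (x i) ∧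
          VecLt b (x i) (x (i + 1))) →
      (∀ i, σ (hist x i) < σ (hist x (i + 1))) ∧ prefCat pre x ∈ A

/-- A set `A ⊆ E^∞` is strategically Ramsey if for every block subspace `V` and every
finite block sequence `z`, there is a block subspace `W ≤ V` such that either II has a
strategy in `G_W(z)` to play in `A`, or I has a strategy in `F_W(z)` to play in `Aᶜ`. -/
def StrategicallyRamsey (b : Module.Basis ℕ 𝔽 E) (A : Set (ℕ → E)) : Prop :=
  ∀ V : Submodule 𝔽 E, IsBlockSubspace b V → ∀ z : List E, IsFinBlockSeq b z →
    ∃ W : Submodule 𝔽 E, W ≤ V ∧ IsBlockSubspace b W ∧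
      (IIWinsG b W z A ∨ IWinsF b W z Aᶜ)

/-- `𝔅(X)`: the set of infinite block sequences of vectors of `X` of norm at most `1`. -/
def BlockSeqIn (b : Module.Basis ℕ 𝔽 E) (Nm : E → ℝ) (X : Submodule 𝔽 E) : Set (ℕ → E) :=
  {x | IsBlockSeq b x ∧ ∀ i, x i ∈ X ∧ Nm (x i) ≤ 1}

/-- The `Δ`-expansion `A_Δ` of a set `A ⊆ E^∞`. -/
def Expand (Nm : E → ℝ) (Δ : ℕ → ℝ) (A : Set (ℕ → E)) : Set (ℕ → E) :=
  {z | ∃ x ∈ A, ∀ i, Nm (x i - z i) < Δ i}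

/-- A set `A ⊆ E^∞` is large if it meets `𝔅(X)` for every block subspace `X`. -/
def Large (b : Module.Basis ℕ 𝔽 E) (Nm : E → ℝ) (A : Set (ℕ → E)) : Prop :=
  ∀ X : Submodule 𝔽 E, IsBlockSubspace b X → (A ∩ BlockSeqIn b Nm X).Nonempty

end Defs


section Aux

set_option synthInstance.maxHeartbeats 1000000
set_option maxHeartbeats 1600000

/-! ### Grid lemma -/

lemma grid_lemma (𝕂 : Subfield ℝ) (R ε : ℝ) (hε : 0 < ε) :
    ∃ G : List 𝕂, ∀ r : 𝕂, |(r : ℝ)| ≤ R → ∃ q ∈ G, |(r : ℝ) - (q : ℝ)| < ε := by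
  obtain ⟨q0, hq00, hq01⟩ := exists_rat_btwn hε
  have hQ : (0 : ℝ) < (q0 : ℝ) := hq00
  obtain ⟨K, hK⟩ := exists_nat_gt ((R + ε) / (q0 : ℝ))
  refine ⟨(List.range (2 * K + 1)).map
    (fun i : ℕ => (((i : ℤ) - K : ℤ) : 𝕂) * ((q0 : ℚ) : 𝕂)), ?_⟩
  intro r hr
  set z : ℤ := ⌊(r : ℝ) / (q0 : ℝ)⌋ with hzdef
  have h1 : (z : ℝ) ≤ (r : ℝ) / (q0 : ℝ) := Int.floor_le _
  have h2 : (r : ℝ) / (q0 : ℝ) < z + 1 := Int.lt_floor_add_one _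
  have hrR : (r : ℝ) ≤ R := le_trans (le_abs_self _) hr
  have hrR' : -R ≤ (r : ℝ) := neg_le_of_abs_le hr
  have hKq : R + ε < (K : ℝ) * (q0 : ℝ) := by rw [div_lt_iff₀ hQ] at hK; linarith
  have hz1 : (z : ℝ) * (q0 : ℝ) ≤ (r : ℝ) := by
    have := mul_le_mul_of_nonneg_right h1 hQ.le
    rwa [div_mul_cancel₀ _ hQ.ne'] at this
  have hz2 : (r : ℝ) < ((z : ℝ) + 1) * (q0 : ℝ) := by
    have := mul_lt_mul_of_pos_right h2 hQ
    rwa [div_mul_cancel₀ _ hQ.ne'] at this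
  have hzK : z ≤ (K : ℤ) := by
    have hm : (z : ℝ) * (q0 : ℝ) < (K : ℝ) * (q0 : ℝ) := by linarith
    have h3 := (mul_lt_mul_iff_left₀ hQ).mp hm
    exact_mod_cast h3.le
  have hzmK : -(K : ℤ) ≤ z := by
    have hm : (-(K : ℝ)) * (q0 : ℝ) < (z : ℝ) * (q0 : ℝ) := by nlinarith
    have h3 : -(K : ℝ) < (z : ℝ) := (mul_lt_mul_iff_left₀ hQ).mp hm
    exact_mod_cast h3.le
  have hmem : (z + K).toNat ∈ List.range (2 * K + 1) := List.mem_range.mpr (by omega)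
  refine ⟨(((((z + K).toNat : ℕ) : ℤ) - K : ℤ) : 𝕂) * ((q0 : ℚ) : 𝕂),
    List.mem_map_of_mem (f := fun i : ℕ => (((i : ℤ) - K : ℤ) : 𝕂) * ((q0 : ℚ) : 𝕂)) hmem, ?_⟩
  have htn : (((z + K).toNat : ℕ) : ℤ) = z + K := Int.toNat_of_nonneg (by omega)
  rw [htn]
  have hco : ((((z + K - K : ℤ) : 𝕂) * ((q0 : ℚ) : 𝕂) : 𝕂) : ℝ) = (z : ℝ) * (q0 : ℝ) := by
    push_cast; ring
  rw [hco, abs_of_nonneg (by linarith)]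
  linarith

/-! ### snoc arithmetic -/

variable {𝕂 : Subfield ℝ}

lemma snoc_add {d : ℕ} (a b : Fin d → 𝕂) (s t : 𝕂) :
    (Fin.snoc (a + b) (s + t) : Fin (d + 1) → 𝕂) = Fin.snoc a s + Fin.snoc b t := by
  funext i
  refine Fin.lastCases ?_ ?_ i <;> simp

lemma snoc_smul {d : ℕ} (t : 𝕂) (a : Fin d → 𝕂) (s : 𝕂) :
    (Fin.snoc (t • a) (t * s) : Fin (d + 1) → 𝕂) =
      t • (Fin.snoc a s : Fin (d + 1) → 𝕂) := by
  funext i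
  refine Fin.lastCases ?_ ?_ i <;> simp [Pi.smul_apply, smul_eq_mul]

lemma snoc_zero {d : ℕ} : (Fin.snoc (0 : Fin d → 𝕂) (0 : 𝕂) : Fin (d + 1) → 𝕂) = 0 := by
  funext i
  refine Fin.lastCases ?_ ?_ i <;> simp

lemma snoc_split {d : ℕ} (a : Fin (d + 1) → 𝕂) (y : Fin d → 𝕂) (s q : 𝕂) :
    a - Fin.snoc y q =
      Fin.snoc (Fin.init a - y) s +
        Fin.snoc (0 : Fin d → 𝕂) (a (Fin.last d) - s - q) := by
  funext i
  refine Fin.lastCases ?_ ?_ i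
  · simp only [Pi.sub_apply, Pi.add_apply, Fin.snoc_last]
    ring
  · intro j
    simp only [Pi.sub_apply, Pi.add_apply, Fin.snoc_castSucc, Fin.init,
      Pi.zero_apply, add_zero]

lemma snoc_drop {d : ℕ} (y : Fin d → 𝕂) (s : 𝕂) :
    (Fin.snoc y 0 : Fin (d + 1) → 𝕂) = Fin.snoc y s - Fin.snoc (0 : Fin d → 𝕂) s := by
  funext i
  refine Fin.lastCases ?_ ?_ i
  · simp
  · intro j; simp

/-! ### Total boundedness of seminorm balls over `𝕂` -/

lemma seminet (𝕂 : Subfield ℝ) :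
    ∀ (d : ℕ) (N : (Fin d → 𝕂) → ℝ),
      (∀ a c, N (a + c) ≤ N a + N c) →
      (∀ (t : 𝕂) (a), N (t • a) = |(t : ℝ)| * N a) →
      ∀ R δ : ℝ, 0 < δ →
      ∃ F : List (Fin d → 𝕂), ∀ a, N a ≤ R → ∃ y ∈ F, N (a - y) < δ := by
  intro d
  induction d with
  | zero =>
    intro N hadd hsm R δ hδ
    refine ⟨[0], fun a _ => ⟨0, by simp, ?_⟩⟩
    have h1 : a - 0 = (0 : 𝕂) • a := by
      funext i; exact i.elim0
    rw [h1, hsm]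
    simpa using hδ
  | succ d IH =>
    intro N hadd hsm R δ hδ
    have hN0 : N 0 = 0 := by simpa using hsm 0 0
    have hNneg : ∀ a, N (-a) = N a := by
      intro a
      have h := hsm (-1) a
      simpa using h
    have hNpos : ∀ a, 0 ≤ N a := by
      intro a
      have h2 := hadd a (-a)
      rw [add_neg_cancel, hN0, hNneg] at h2
      linarith
    have hNsub : ∀ a c, N (a - c) ≤ N a + N c := by
      intro a c
      rw [sub_eq_add_neg]
      calc N (a + -c) ≤ N a + N (-c) := hadd _ _
        _ = N a + N c := by rw [hNneg]
    set N' : (Fin d → 𝕂) → ℝ := fun a => ⨅ t : 𝕂, N (Fin.snoc a t) with hN'def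
    have hbdd : ∀ a : Fin d → 𝕂, BddBelow (Set.range fun t : 𝕂 => N (Fin.snoc a t)) :=
      fun a => ⟨0, by rintro _ ⟨t, rfl⟩; exact hNpos _⟩
    have hN'le : ∀ (a : Fin d → 𝕂) (t : 𝕂), N' a ≤ N (Fin.snoc a t) :=
      fun a t => ciInf_le (hbdd a) t
    have hN'pos : ∀ a, 0 ≤ N' a := fun a => le_ciInf fun t => hNpos _
    have hN'lt : ∀ (a : Fin d → 𝕂) (r : ℝ), N' a < r → ∃ t : 𝕂, N (Fin.snoc a t) < r :=
      fun a r h => exists_lt_of_ciInf_lt h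
    have hN'add : ∀ a c, N' (a + c) ≤ N' a + N' c := by
      intro a c
      refine le_ciInf_add_ciInf ?_
      intro s t
      calc N' (a + c) ≤ N (Fin.snoc (a + c) (s + t)) := hN'le _ _
        _ = N (Fin.snoc a s + Fin.snoc c t) := by rw [snoc_add]
        _ ≤ _ := hadd _ _
    have key : ∀ (t : 𝕂), t ≠ 0 → ∀ a, N' (t • a) ≤ |(t : ℝ)| * N' a := by
      intro t ht a
      have habs : (0 : ℝ) < |(t : ℝ)| := by
        rw [abs_pos]
        exact_mod_cast ht
      rw [mul_comm, ← div_le_iff₀ habs]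
      refine le_ciInf fun s => ?_
      rw [div_le_iff₀ habs]
      calc N' (t • a) ≤ N (Fin.snoc (t • a) (t * s)) := hN'le _ _
        _ = N (t • (Fin.snoc a s : Fin (d + 1) → 𝕂)) := by rw [snoc_smul]
        _ = |(t : ℝ)| * N (Fin.snoc a s) := hsm _ _
        _ = N (Fin.snoc a s) * |(t : ℝ)| := mul_comm _ _
    have hN'sm : ∀ (t : 𝕂) (a), N' (t • a) = |(t : ℝ)| * N' a := by
      intro t a
      rcases eq_or_ne t 0 with rfl | ht
      · rw [zero_smul]
        have h1 : N' (0 : Fin d → 𝕂) ≤ 0 := by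
          have h := hN'le (0 : Fin d → 𝕂) 0
          rwa [snoc_zero, hN0] at h
        have h3 : N' (0 : Fin d → 𝕂) = 0 := le_antisymm h1 (hN'pos _)
        rw [h3]
        simp
      · refine le_antisymm (key t ht a) ?_
        have h2 := key t⁻¹ (inv_ne_zero ht) (t • a)
        rw [inv_smul_smul₀ ht] at h2
        have habs : (0 : ℝ) < |(t : ℝ)| := by
          rw [abs_pos]; exact_mod_cast ht
        have hco : |((t⁻¹ : 𝕂) : ℝ)| = |(t : ℝ)|⁻¹ := by
          push_cast
          exact abs_inv _
        rw [hco] at h2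
        have h4 := mul_le_mul_of_nonneg_left h2 habs.le
        calc |(t : ℝ)| * N' a ≤ |(t : ℝ)| * (|(t : ℝ)|⁻¹ * N' (t • a)) := h4
          _ = N' (t • a) := by field_simp
    obtain ⟨F', hF'⟩ := IH N' hN'add hN'sm R (δ / 4) (by linarith)
    have hsel : ∀ y' : Fin d → 𝕂, ∃ s : 𝕂, N (Fin.snoc y' s) < N' y' + 1 :=
      fun y' => hN'lt y' _ (lt_add_one _)
    choose sel hselp using hsel
    set cN : ℝ := N (Fin.snoc (0 : Fin d → 𝕂) 1) with hcN
    have hzr : ∀ r : 𝕂, N (Fin.snoc (0 : Fin d → 𝕂) r) = |(r : ℝ)| * cN := by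
      intro r
      have h4 : (Fin.snoc (0 : Fin d → 𝕂) r : Fin (d + 1) → 𝕂) =
          r • (Fin.snoc (0 : Fin d → 𝕂) 1 : Fin (d + 1) → 𝕂) := by
        rw [← snoc_smul, smul_zero, mul_one]
      rw [h4, hsm]
    rcases eq_or_lt_of_le (hNpos (Fin.snoc (0 : Fin d → 𝕂) 1)) with hc0 | hcpos
    · -- the last basis direction is null
      refine ⟨F'.map (fun y' => Fin.snoc y' 0), ?_⟩
      intro a ha
      have hinit : N' (Fin.init a) ≤ R := by
        have h := hN'le (Fin.init a) (a (Fin.last d))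
        rw [Fin.snoc_init_self] at h
        linarith
      obtain ⟨y', hy'F, hy'⟩ := hF' (Fin.init a) hinit
      obtain ⟨s, hs⟩ := hN'lt _ _ hy'
      refine ⟨Fin.snoc y' 0, List.mem_map_of_mem hy'F, ?_⟩
      calc N (a - Fin.snoc y' 0)
          ≤ N (Fin.snoc (Fin.init a - y') s) + N (Fin.snoc (0 : Fin d → 𝕂) (a (Fin.last d) - s - 0)) := by
            rw [snoc_split a y' s 0]; exact hadd _ _
        _ < δ / 4 + |((a (Fin.last d) - s - 0 : 𝕂) : ℝ)| * cN := by
            rw [hzr]; exact add_lt_add_of_lt_of_le hs (le_refl _)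
        _ ≤ δ / 4 + 0 := by
            have h5 : |((a (Fin.last d) - s - 0 : 𝕂) : ℝ)| * cN ≤ 0 := by
              rw [hcN, ← hc0, mul_zero]
            linarith
        _ < δ := by linarith
    · -- the last basis direction is non-null: use a grid in the last coordinate
      have hRypos : (0 : ℝ) < δ / (4 * cN) := by positivity
      set Ry : (Fin d → 𝕂) → ℝ :=
        fun y' => (R + (N' y' + 1 + |((sel y' : 𝕂) : ℝ)| * cN) + δ / 4) / cN with hRy
      choose G hGp using fun y' : Fin d → 𝕂 => grid_lemma 𝕂 (Ry y') (δ / (4 * cN)) hRypos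
      refine ⟨F'.flatMap (fun y' => (G y').map (Fin.snoc y')), ?_⟩
      intro a ha
      have hinit : N' (Fin.init a) ≤ R := by
        have h := hN'le (Fin.init a) (a (Fin.last d))
        rw [Fin.snoc_init_self] at h
        linarith
      obtain ⟨y', hy'F, hy'⟩ := hF' (Fin.init a) hinit
      obtain ⟨s, hs⟩ := hN'lt _ _ hy'
      set r : 𝕂 := a (Fin.last d) - s with hrdef
      have hsnY : N (Fin.snoc y' 0) ≤ N' y' + 1 + |((sel y' : 𝕂) : ℝ)| * cN := by
        rw [snoc_drop y' (sel y')]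
        calc N (Fin.snoc y' (sel y') - Fin.snoc (0 : Fin d → 𝕂) (sel y'))
            ≤ N (Fin.snoc y' (sel y')) + N (Fin.snoc (0 : Fin d → 𝕂) (sel y')) := hNsub _ _
          _ ≤ (N' y' + 1) + |((sel y' : 𝕂) : ℝ)| * cN := by
              rw [hzr]; exact add_le_add (hselp y').le (le_refl _)
      have haY2 : N (a - Fin.snoc y' 0) ≤ R + (N' y' + 1 + |((sel y' : 𝕂) : ℝ)| * cN) := by
        calc N (a - Fin.snoc y' 0) ≤ N a + N (Fin.snoc y' 0) := hNsub _ _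
          _ ≤ _ := add_le_add ha hsnY
      have hrbound : |(r : ℝ)| ≤ Ry y' := by
        have h6 : (Fin.snoc (0 : Fin d → 𝕂) (r - 0) : Fin (d + 1) → 𝕂) =
            (a - Fin.snoc y' 0) - Fin.snoc (Fin.init a - y') s := by
          rw [snoc_split a y' s 0, add_sub_cancel_left, hrdef]
        have h7 : |((r - 0 : 𝕂) : ℝ)| * cN ≤
            R + (N' y' + 1 + |((sel y' : 𝕂) : ℝ)| * cN) + δ / 4 := by
          rw [← hzr, h6]
          calc N ((a - Fin.snoc y' 0) - Fin.snoc (Fin.init a - y') s)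
              ≤ N (a - Fin.snoc y' 0) + N (Fin.snoc (Fin.init a - y') s) := hNsub _ _
            _ ≤ _ := add_le_add haY2 hs.le
        rw [sub_zero] at h7
        rw [hRy, le_div_iff₀ hcpos]
        exact h7
      obtain ⟨q, hqG, hq⟩ := hGp y' r hrbound
      refine ⟨Fin.snoc y' q, ?_, ?_⟩
      · rw [List.mem_flatMap]
        exact ⟨y', hy'F, List.mem_map_of_mem hqG⟩
      · have h9 : |((a (Fin.last d) - s - q : 𝕂) : ℝ)| * cN < δ / 4 := by
          have h10 : |((a (Fin.last d) - s - q : 𝕂) : ℝ)| < δ / (4 * cN) := by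
            have h11 : ((a (Fin.last d) - s - q : 𝕂) : ℝ) = (r : ℝ) - (q : ℝ) := by
              rw [hrdef]; push_cast; ring
            rw [h11]
            exact hq
          calc |((a (Fin.last d) - s - q : 𝕂) : ℝ)| * cN < (δ / (4 * cN)) * cN :=
                mul_lt_mul_of_pos_right h10 hcpos
            _ = δ / 4 := by rw [div_mul_eq_mul_div, mul_div_mul_right δ 4 (ne_of_gt hcpos)]
        calc N (a - Fin.snoc y' q)
            ≤ N (Fin.snoc (Fin.init a - y') s) + N (Fin.snoc (0 : Fin d → 𝕂) (a (Fin.last d) - s - q)) := by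
              rw [snoc_split a y' s q]; exact hadd _ _
          _ < δ / 4 + δ / 4 := by rw [hzr]; exact add_lt_add hs h9
          _ < δ := by linarith

/-! ### Lists of bounded length over a finite alphabet -/

def listsLe {α : Type _} (l : List α) : ℕ → List (List α)
  | 0 => [[]]
  | (k + 1) => listsLe l k ++ (listsLe l k).flatMap (fun p => l.map (fun v => p ++ [v]))

lemma mem_listsLe {α : Type _} (l : List α) :
    ∀ (k : ℕ) (p : List α), p.length ≤ k → (∀ v ∈ p, v ∈ l) → p ∈ listsLe l k := by
  intro k
  induction k with
  | zero =>
    intro p hp _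
    rw [Nat.le_zero, List.length_eq_zero_iff] at hp
    simp [listsLe, hp]
  | succ k IH =>
    intro p hp hv
    by_cases h : p.length ≤ k
    · exact List.mem_append_left _ (IH p h hv)
    · have hlen : p.length = k + 1 := by omega
      rcases List.eq_nil_or_concat p with rfl | ⟨L, v, rfl⟩
      · simp at hlen
      · refine List.mem_append_right _ ?_
        rw [List.mem_flatMap]
        have hLlen : L.length = k := by
          rw [List.concat_eq_append, List.length_append] at hlen
          simp at hlen
          omega
        refine ⟨L, IH L (le_of_eq hLlen) ?_, ?_⟩
        · intro w hw
          exact hv w (by rw [List.concat_eq_append]; exact List.mem_append_left _ hw)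
        · rw [List.mem_map]
          refine ⟨v, hv v ?_, List.concat_eq_append.symm⟩
          rw [List.concat_eq_append]
          exact List.mem_append_right _ (by simp)

def natListMax (l : List ℕ) : ℕ := l.foldr max 0

lemma le_natListMax {l : List ℕ} {a : ℕ} (h : a ∈ l) : a ≤ natListMax l := by
  induction l with
  | nil => cases h
  | cons x xs IH =>
    rcases List.mem_cons.mp h with rfl | h
    · exact le_max_left _ _
    · exact le_trans (IH h) (le_max_right _ _)

end Aux


section Blocks

variable {𝔽 : Type} [Field 𝔽] {E : Type} [AddCommGroup E] [Module 𝔽 E]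

lemma supp_nonempty (b : Module.Basis ℕ 𝔽 E) {x : E} (hx : x ≠ 0) : (supp b x).Nonempty :=
  Finsupp.support_nonempty_iff.mpr (fun h => hx (b.repr.map_eq_zero_iff.mp h))

lemma blockSeq_vecLt (b : Module.Basis ℕ 𝔽 E) {x : ℕ → E} (hx : IsBlockSeq b x) :
    ∀ {i j : ℕ}, i < j → VecLt b (x i) (x j) := by
  intro i j h
  induction j with
  | zero => omega
  | succ j IH =>
    rcases Nat.lt_succ_iff_lt_or_eq.mp h with h' | h'
    · intro m hm n hn
      obtain ⟨k, hk⟩ := supp_nonempty b (hx.1 j)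
      exact lt_trans (IH h' m hm k hk) (hx.2 j k hk n hn)
    · subst h'
      exact hx.2 i

lemma blockSeq_le_supp (b : Module.Basis ℕ 𝔽 E) {x : ℕ → E} (hx : IsBlockSeq b x) :
    ∀ n, ∀ j ∈ supp b (x n), n ≤ j := by
  intro n
  induction n with
  | zero => intro j _; exact Nat.zero_le j
  | succ n IH =>
    intro j hj
    obtain ⟨k, hk⟩ := supp_nonempty b (hx.1 n)
    exact Nat.succ_le_of_lt (lt_of_le_of_lt (IH k hk) (hx.2 n k hk j hj))

lemma supp_rep_subset (b : Module.Basis ℕ 𝔽 E) {u : ℕ → E} (hu : IsBlockSeq b u) (c : ℕ →₀ 𝔽)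
    (i : ℕ) (hci : c i ≠ 0) :
    supp b (u i) ⊆ supp b (c.sum fun j a => a • u j) := by
  intro j hj
  have hj' : (b.repr (u i)) j ≠ 0 := Finsupp.mem_support_iff.mp hj
  have hrepr : b.repr (c.sum fun k a => a • u k) = c.sum fun k a => a • b.repr (u k) := by
    rw [map_finsuppSum]
    refine Finsupp.sum_congr fun k _ => ?_
    rw [map_smul]
  have happ : (b.repr (c.sum fun k a => a • u k)) j = c i * (b.repr (u i)) j := by
    rw [hrepr, Finsupp.sum, Finsupp.finset_sum_apply]
    rw [Finset.sum_eq_single i ?_ ?_]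
    · rw [Finsupp.smul_apply, smul_eq_mul]
    · intro k hk hki
      have hjk : j ∉ supp b (u k) := by
        intro hjk
        rcases lt_or_gt_of_ne hki with h | h
        · exact absurd (blockSeq_vecLt b hu h j hjk j hj) (lt_irrefl j)
        · exact absurd (blockSeq_vecLt b hu h j hj j hjk) (lt_irrefl j)
      have hz : (b.repr (u k)) j = 0 := by
        by_contra hnz
        exact hjk (Finsupp.mem_support_iff.mpr hnz)
      rw [Finsupp.smul_apply, hz, smul_zero]
    · intro hni
      exact absurd (Finsupp.mem_support_iff.mpr hci) hni
  exact Finsupp.mem_support_iff.mpr (by rw [happ]; exact mul_ne_zero hci hj')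

end Blocks

section NetEx

set_option maxHeartbeats 1600000
set_option synthInstance.maxHeartbeats 1000000

variable {𝕂 : Subfield ℝ} {E : Type} [AddCommGroup E] [Module 𝕂 E]

lemma netEx (b : Module.Basis ℕ 𝕂 E) (Nm : E → ℝ)
    (hN0 : ∀ x : E, Nm x = 0 ↔ x = 0)
    (hNadd : ∀ x y : E, Nm (x + y) ≤ Nm x + Nm y)
    (hNsmul : ∀ (a : 𝕂) (x : E), Nm (a • x) = |(a : ℝ)| * Nm x)
    (X : Submodule 𝕂 E) (u : ℕ → E) (hu : IsBlockSeq b u) (huX : ∀ i, u i ∈ X)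
    (L : ℕ) (ε : ℝ) (hε : 0 < ε) :
    ∃ ns : List E, (∀ y ∈ ns, y ∈ X ∧ y ≠ 0) ∧
      ∀ x : E, x ∈ Submodule.span 𝕂 (Set.range u) → x ≠ 0 → Nm x ≤ 1 →
        supp b x ⊆ Finset.range L →
        ∃ y ∈ ns, supp b y ⊆ supp b x ∧ Nm (x - y) < ε := by
  classical
  have hNneg : ∀ x : E, Nm (-x) = Nm x := by
    intro x; have h := hNsmul (-1) x; simpa using h
  have hNnonneg : ∀ x : E, 0 ≤ Nm x := by
    intro x
    have h2 := hNadd x (-x)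
    rw [add_neg_cancel, (hN0 0).mpr rfl, hNneg] at h2
    linarith
  have perS : ∀ S : Finset ℕ, ∃ ns : List E,
      (∀ y ∈ ns, y ∈ X ∧ y ≠ 0 ∧ supp b y ⊆ S) ∧
      ∀ x : E, x ∈ Submodule.span 𝕂 (Set.range u) → x ≠ 0 → Nm x ≤ 1 →
        supp b x = S → supp b x ⊆ Finset.range L → ∃ y ∈ ns, Nm (x - y) < ε := by
    intro S
    set φ : (Fin L → 𝕂) → E :=
      fun a => ∑ i : Fin L, if supp b (u (i : ℕ)) ⊆ S then a i • u (i : ℕ) else 0 with hφ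
    have φadd : ∀ a c, φ (a + c) = φ a + φ c := by
      intro a c
      simp only [hφ]
      rw [← Finset.sum_add_distrib]
      refine Finset.sum_congr rfl fun i _ => ?_
      by_cases h : supp b (u (i : ℕ)) ⊆ S
      · simp [h, add_smul]
      · simp [h]
    have φsmul : ∀ (t : 𝕂) a, φ (t • a) = t • φ a := by
      intro t a
      simp only [hφ]
      rw [Finset.smul_sum]
      refine Finset.sum_congr rfl fun i _ => ?_
      by_cases h : supp b (u (i : ℕ)) ⊆ S
      · simp [h, smul_smul]
      · simp [h]
    have φsub : ∀ a c, φ (a - c) = φ a - φ c := by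
      intro a c
      have h := φadd c (a - c)
      rw [add_sub_cancel] at h
      rw [h, add_sub_cancel_left]
    have φmem : ∀ a, φ a ∈ X := by
      intro a
      refine Submodule.sum_mem _ fun i _ => ?_
      by_cases h : supp b (u (i : ℕ)) ⊆ S
      · rw [if_pos h]; exact Submodule.smul_mem _ _ (huX _)
      · rw [if_neg h]; exact Submodule.zero_mem _
    have φsupp : ∀ a, supp b (φ a) ⊆ S := by
      intro a j hj
      have h1 : b.repr (φ a) = ∑ i : Fin L,
          (if supp b (u (i : ℕ)) ⊆ S then a i • b.repr (u (i : ℕ)) else 0) := by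
        simp only [hφ]
        rw [map_sum]
        refine Finset.sum_congr rfl fun i _ => ?_
        by_cases h : supp b (u (i : ℕ)) ⊆ S
        · rw [if_pos h, if_pos h, map_smul]
        · rw [if_neg h, if_neg h, map_zero]
      have h2 : j ∈ (b.repr (φ a)).support := hj
      rw [h1] at h2
      have h3 := Finsupp.support_finset_sum h2
      rw [Finset.mem_biUnion] at h3
      obtain ⟨i, -, hi⟩ := h3
      by_cases h : supp b (u (i : ℕ)) ⊆ S
      · rw [if_pos h] at hi
        exact h (Finsupp.support_smul hi)
      · rw [if_neg h] at hi
        simp at hi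
    obtain ⟨F, hF⟩ := seminet 𝕂 L (fun a => Nm (φ a))
      (fun a c => by
        show Nm (φ (a + c)) ≤ Nm (φ a) + Nm (φ c)
        rw [φadd]; exact hNadd _ _)
      (fun t a => by
        show Nm (φ (t • a)) = |(t : ℝ)| * Nm (φ a)
        rw [φsmul]; exact hNsmul _ _) 1 (ε / 2) (by linarith)
    have hrepcov : ∀ x : E, x ∈ Submodule.span 𝕂 (Set.range u) → x ≠ 0 → Nm x ≤ 1 →
        supp b x = S → supp b x ⊆ Finset.range L →
        (∃ i : Fin L, supp b (u (i : ℕ)) ⊆ S) ∧ ∃ ya ∈ F, Nm (x - φ ya) < ε / 2 := by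
      intro x hxs hx0 hxN hxS hxL
      obtain ⟨c, hc⟩ := Finsupp.mem_span_range_iff_exists_finsupp.mp hxs
      have hcsupp : ∀ i, c i ≠ 0 → supp b (u i) ⊆ supp b x := by
        intro i hci
        have h := supp_rep_subset b hu c i hci
        rwa [hc] at h
      have hcL : ∀ i, c i ≠ 0 → i < L := by
        intro i hci
        obtain ⟨j, hj⟩ := supp_nonempty b (hu.1 i)
        have h1 : j ∈ Finset.range L := hxL (hcsupp i hci hj)
        have h2 := blockSeq_le_supp b hu i j hj
        rw [Finset.mem_range] at h1
        omega
      have hcex : ∃ i, c i ≠ 0 := by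
        by_contra h
        push_neg at h
        have hz : c = 0 := by ext i; simp [h i]
        rw [hz, Finsupp.sum_zero_index] at hc
        exact hx0 hc.symm
      obtain ⟨i1, hi1⟩ := hcex
      constructor
      · exact ⟨⟨i1, hcL i1 hi1⟩, hxS ▸ hcsupp i1 hi1⟩
      · have hφa : φ (fun i => c (i : ℕ)) = x := by
          have h1 : φ (fun i : Fin L => c (i : ℕ)) =
              ∑ i ∈ Finset.range L, (if supp b (u i) ⊆ S then c i • u i else 0) :=
            Fin.sum_univ_eq_sum_range (fun i => if supp b (u i) ⊆ S then c i • u i else 0) L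
          rw [h1]
          have h2 : ∀ i ∈ Finset.range L,
              (if supp b (u i) ⊆ S then c i • u i else 0) = c i • u i := by
            intro i _
            by_cases hci : c i = 0
            · by_cases hP : supp b (u i) ⊆ S <;> simp [hci, hP]
            · rw [if_pos (hxS ▸ hcsupp i hci)]
          rw [Finset.sum_congr rfl h2, ← hc]
          have hsub : c.support ⊆ Finset.range L := by
            intro i hi
            rw [Finsupp.mem_support_iff] at hi
            exact Finset.mem_range.mpr (hcL i hi)
          exact (Finsupp.sum_of_support_subset c hsub (fun i a => a • u i)
            (fun i _ => zero_smul _ _)).symm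
        obtain ⟨ya, hyaF, hya⟩ := hF (fun i => c (i : ℕ)) (by rw [hφa]; exact hxN)
        refine ⟨ya, hyaF, ?_⟩
        rw [← hφa, ← φsub]
        exact hya
    by_cases hex : ∃ i : Fin L, supp b (u (i : ℕ)) ⊆ S
    · obtain ⟨i0, hi0⟩ := hex
      have hu0 : Nm (u (i0 : ℕ)) ≠ 0 := fun h => hu.1 _ ((hN0 _).mp h)
      have huNpos : 0 < Nm (u (i0 : ℕ)) := lt_of_le_of_ne (hNnonneg _) (Ne.symm hu0)
      obtain ⟨q, hq0, hq1⟩ := exists_rat_btwn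
        (show (0 : ℝ) < (ε / 2) / Nm (u (i0 : ℕ)) by positivity)
      have hq0' : (0 : ℝ) < (q : ℝ) := hq0
      have hqco : (((q : ℚ) : 𝕂) : ℝ) = ((q : ℚ) : ℝ) := by push_cast; ring
      have hqK : ((q : ℚ) : 𝕂) ≠ 0 := by
        intro h
        have h2 : (((q : ℚ) : 𝕂) : ℝ) = 0 := by rw [h]; simp
        rw [hqco] at h2
        exact hq0'.ne' h2
      have htv0 : ((q : ℚ) : 𝕂) • u (i0 : ℕ) ≠ 0 := smul_ne_zero hqK (hu.1 _)
      have htvN : Nm (((q : ℚ) : 𝕂) • u (i0 : ℕ)) < ε / 2 := by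
        rw [hNsmul, hqco, abs_of_pos hq0']
        exact (lt_div_iff₀ huNpos).mp hq1
      have htvsupp : supp b (((q : ℚ) : 𝕂) • u (i0 : ℕ)) ⊆ S := by
        intro j hj
        have h1 : b.repr (((q : ℚ) : 𝕂) • u (i0 : ℕ)) =
            ((q : ℚ) : 𝕂) • b.repr (u (i0 : ℕ)) := map_smul _ _ _
        have h2 : j ∈ (((q : ℚ) : 𝕂) • b.repr (u (i0 : ℕ))).support := by
          rw [← h1]; exact hj
        exact hi0 (Finsupp.support_smul h2)
      refine ⟨(F.map φ).filter (fun y => decide (y ≠ 0)) ++ [((q : ℚ) : 𝕂) • u (i0 : ℕ)],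
        ?_, ?_⟩
      · intro y hy
        rcases List.mem_append.mp hy with hy | hy
        · rw [List.mem_filter] at hy
          obtain ⟨hy1, hy2⟩ := hy
          obtain ⟨aa, -, rfl⟩ := List.mem_map.mp hy1
          exact ⟨φmem aa, by simpa using hy2, φsupp aa⟩
        · rw [List.mem_singleton] at hy
          subst hy
          exact ⟨Submodule.smul_mem _ _ (huX _), htv0, htvsupp⟩
      · intro x hxs hx0 hxN hxS hxL
        obtain ⟨-, ya, hyaF, hya⟩ := hrepcov x hxs hx0 hxN hxS hxL
        by_cases hz : φ ya = 0
        · refine ⟨((q : ℚ) : 𝕂) • u (i0 : ℕ), List.mem_append_right _ (by simp), ?_⟩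
          have hxsmall : Nm x < ε / 2 := by rwa [hz, sub_zero] at hya
          calc Nm (x - ((q : ℚ) : 𝕂) • u (i0 : ℕ))
              ≤ Nm x + Nm (-(((q : ℚ) : 𝕂) • u (i0 : ℕ))) := by
                rw [sub_eq_add_neg]; exact hNadd _ _
            _ = Nm x + Nm (((q : ℚ) : 𝕂) • u (i0 : ℕ)) := by rw [hNneg]
            _ < ε := by linarith
        · refine ⟨φ ya, List.mem_append_left _ ?_, by linarith⟩
          rw [List.mem_filter]
          exact ⟨List.mem_map_of_mem hyaF, by simpa using hz⟩
    · refine ⟨(F.map φ).filter (fun y => decide (y ≠ 0)), ?_, ?_⟩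
      · intro y hy
        rw [List.mem_filter] at hy
        obtain ⟨hy1, hy2⟩ := hy
        obtain ⟨aa, -, rfl⟩ := List.mem_map.mp hy1
        exact ⟨φmem aa, by simpa using hy2, φsupp aa⟩
      · intro x hxs hx0 hxN hxS hxL
        exact absurd (hrepcov x hxs hx0 hxN hxS hxL).1 hex
  choose f hf1 hf2 using perS
  refine ⟨((Finset.range L).powerset.toList).flatMap f, ?_, ?_⟩
  · intro y hy
    rw [List.mem_flatMap] at hy
    obtain ⟨S, -, hyS⟩ := hy
    exact ⟨(hf1 S y hyS).1, (hf1 S y hyS).2.1⟩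
  · intro x hx1 hx2 hx3 hx4
    obtain ⟨y, hy, hNmxy⟩ := hf2 (supp b x) x hx1 hx2 hx3 rfl hx4
    refine ⟨y, ?_, (hf1 _ y hy).2.2, hNmxy⟩
    rw [List.mem_flatMap]
    refine ⟨supp b x, ?_, hy⟩
    rw [Finset.mem_toList, Finset.mem_powerset]
    exact hx4

end NetEx

set_option maxHeartbeats 1600000 in
set_option synthInstance.maxHeartbeats 1000000 in
theorem intervals_of_IWinsF
    (𝕂 : Subfield ℝ) [Countable 𝕂]
    {E : Type} [AddCommGroup E] [Module 𝕂 E]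
    (b : Module.Basis ℕ 𝕂 E) (Nm : E → ℝ)
    (hN0 : ∀ x : E, Nm x = 0 ↔ x = 0)
    (hNadd : ∀ x y : E, Nm (x + y) ≤ Nm x + Nm y)
    (hNsmul : ∀ (a : 𝕂) (x : E), Nm (a • x) = |(a : ℝ)| * Nm x)
    (hNval : ∀ x : E, Nm x ∈ 𝕂)
    (X : Submodule 𝕂 E) (hX : IsBlockSubspace b X)
    (B : Set (ℕ → E)) (hB : IWinsF b X [] B)
    (Δ : ℕ → ℝ) (hΔ : ∀ i, 0 < Δ i) :
    ∃ lo hi : ℕ → ℕ, (∀ k, lo k ≤ hi k) ∧ (∀ k, hi k < lo (k + 1)) ∧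
      ∀ x ∈ BlockSeqIn b Nm X,
        (∀ n, ∃ m, NatLt b (hi 0) (x n) ∧ (∀ j ∈ supp b (x n), j < lo m) ∧
          NatLt b (hi m) (x (n + 1))) →
        x ∈ Expand Nm Δ B := by
  classical
  obtain ⟨σ, hσ⟩ := hB
  obtain ⟨u, hu, hXspan⟩ := hX
  have huX : ∀ i, u i ∈ X := fun i => hXspan ▸ Submodule.subset_span ⟨i, rfl⟩
  have hNneg : ∀ x : E, Nm (-x) = Nm x := by
    intro x; have h := hNsmul (-1) x; simpa using h
  obtain ⟨mΔ, hmΔ0, hmΔle⟩ : ∃ mΔ : ℕ → ℝ, (∀ n, 0 < mΔ n) ∧ ∀ i n, i ≤ n → mΔ n ≤ Δ i :=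
    ⟨fun n => (Finset.range (n + 1)).inf' ⟨0, Finset.mem_range.mpr (Nat.succ_pos n)⟩ Δ,
      fun n => (Finset.lt_inf'_iff _).mpr fun i _ => hΔ i,
      fun i n h => Finset.inf'_le _ (Finset.mem_range.mpr (Nat.lt_succ_of_le h))⟩
  choose netAt hnet1 hnet2 using fun L : ℕ =>
    netEx b Nm hN0 hNadd hNsmul X u hu huX L (mΔ L) (hmΔ0 L)
  obtain ⟨bnd, hbnd1, hbnd2⟩ : ∃ bnd : ℕ → List E → ℕ, (∀ L net, L ≤ bnd L net) ∧
      ∀ L (net p : List E), p.length ≤ L → (∀ v ∈ p, v ∈ net) → σ p ≤ bnd L net :=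
    ⟨fun L net => max L (natListMax ((listsLe net L).map σ)), fun L net => le_max_left _ _,
      fun L net p h1 h2 => le_trans
        (le_natListMax (List.mem_map_of_mem (f := σ) (mem_listsLe net L p h1 h2)))
        (le_max_right _ _)⟩
  obtain ⟨T, hT0, hTs⟩ : ∃ T : ℕ → ℕ × List E, T 0 = (0, netAt 0) ∧
      ∀ m, T (m + 1) =
        (bnd (T m).1 (T m).2 + 1, (T m).2 ++ netAt (bnd (T m).1 (T m).2 + 1)) :=
    ⟨fun m => Nat.rec ((0 : ℕ), netAt 0)
      (fun _ p => (bnd p.1 p.2 + 1, p.2 ++ netAt (bnd p.1 p.2 + 1))) m, rfl, fun m => rfl⟩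
  obtain ⟨lo, hi, Net, hlo0, hlos, hNet0, hNets, hlohi, hhib⟩ :
      ∃ (lo hi : ℕ → ℕ) (Net : ℕ → List E),
        lo 0 = 0 ∧ (∀ m, lo (m + 1) = hi m + 1) ∧ Net 0 = netAt (lo 0) ∧
        (∀ m, Net (m + 1) = Net m ++ netAt (lo (m + 1))) ∧ (∀ m, lo m ≤ hi m) ∧
        ∀ m (p : List E), p.length ≤ lo m → (∀ v ∈ p, v ∈ Net m) → σ p ≤ hi m := by
    refine ⟨fun m => (T m).1, fun m => bnd (T m).1 (T m).2, fun m => (T m).2,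
      ?_, ?_, ?_, ?_, fun m => hbnd1 _ _, fun m => hbnd2 _ _⟩
    · simp [hT0]
    · intro m
      simp [hTs]
    · simp [hT0]
    · intro m
      simp [hTs]
  have hNetmono : ∀ {m m' : ℕ}, m ≤ m' → ∀ v ∈ Net m, v ∈ Net m' := by
    intro m m' h
    induction h with
    | refl => exact fun v hv => hv
    | @step k h ih =>
      intro v hv
      rw [hNets k]
      exact List.mem_append_left _ (ih v hv)
  have hNetX : ∀ m, ∀ v ∈ Net m, v ∈ X ∧ v ≠ 0 := by
    intro m
    induction m with
    | zero =>
      intro v hv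
      rw [hNet0] at hv
      exact hnet1 _ v hv
    | succ k ih =>
      intro v hv
      rw [hNets] at hv
      rcases List.mem_append.mp hv with h | h
      · exact ih v h
      · exact hnet1 _ v h
  have hNetcov : ∀ m (z : E), z ∈ X → z ≠ 0 → Nm z ≤ 1 →
      supp b z ⊆ Finset.range (lo m) →
      ∃ y ∈ Net m, supp b y ⊆ supp b z ∧ Nm (z - y) < mΔ (lo m) := by
    intro m z h1 h2 h3 h4
    have hz : z ∈ Submodule.span 𝕂 (Set.range u) := by rw [← hXspan]; exact h1
    obtain ⟨y, hy, hs, hn⟩ := hnet2 (lo m) z hz h2 h3 h4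
    refine ⟨y, ?_, hs, hn⟩
    cases m with
    | zero => rw [hNet0]; exact hy
    | succ k => rw [hNets]; exact List.mem_append_right _ hy
  have hloge : ∀ m, m ≤ lo m := by
    intro m
    induction m with
    | zero => exact Nat.zero_le _
    | succ k ih =>
      have h := hlohi k
      rw [hlos]
      omega
  refine ⟨lo, hi, hlohi, fun k => by rw [hlos]; omega, ?_⟩
  intro x hxB hcond
  obtain ⟨hxblock, hxmem⟩ := hxB
  have hx0 : ∀ n, x n ≠ 0 := hxblock.1
  have hex : ∀ n, ∃ m, supp b (x n) ⊆ Finset.range (lo m) := by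
    intro n
    refine ⟨(supp b (x n)).sup id + 1, fun j hj => Finset.mem_range.mpr ?_⟩
    have h1 : j ≤ (supp b (x n)).sup id := Finset.le_sup (f := id) hj
    have h2 := hloge ((supp b (x n)).sup id + 1)
    omega
  obtain ⟨mst, hmstspec, hmstmin⟩ : ∃ mst : ℕ → ℕ,
      (∀ n, supp b (x n) ⊆ Finset.range (lo (mst n))) ∧
      ∀ n m, supp b (x n) ⊆ Finset.range (lo m) → mst n ≤ m :=
    ⟨fun n => Nat.find (hex n), fun n => Nat.find_spec (hex n),
      fun n m h => Nat.find_min' (hex n) h⟩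
  choose y hyNet hysupp hyNm using fun n =>
    hNetcov (mst n) (x n) (hxmem n).1 (hx0 n) (hxmem n).2 (hmstspec n)
  have hidx : ∀ n, n < lo (mst n) := by
    intro n
    obtain ⟨j, hj⟩ := supp_nonempty b (hx0 n)
    have h1 := blockSeq_le_supp b hxblock n j hj
    have h2 := Finset.mem_range.mp (hmstspec n hj)
    omega
  have hacc : ∀ n, Nm (y n - x n) < Δ n := by
    intro n
    have h1 : Nm (y n - x n) = Nm (x n - y n) := by rw [← hNneg, neg_sub]
    rw [h1]
    exact lt_of_lt_of_le (hyNm n) (hmΔle n (lo (mst n)) (hidx n).le)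
  have hsig : ∀ n, NatLt b (σ (hist y n)) (y n) := by
    intro n
    cases n with
    | zero =>
      intro j hj
      obtain ⟨m, hm1, hm2, hm3⟩ := hcond 0
      have hσ0 : σ (hist y 0) ≤ hi 0 := by
        refine hhib 0 _ ?_ ?_
        · simp [hist]
        · intro v hv
          exact absurd hv (by simp [hist])
      exact lt_of_le_of_lt hσ0 (hm1 j (hysupp 0 hj))
    | succ n =>
      obtain ⟨m, hm1, hm2, hm3⟩ := hcond n
      intro j hj
      have hmst_le : ∀ k, k ≤ n → mst k ≤ m := by
        intro k hk
        apply hmstmin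
        intro a ha
        rcases Nat.lt_or_ge k n with h | h
        · obtain ⟨cc, hcc⟩ := supp_nonempty b (hx0 n)
          exact Finset.mem_range.mpr
            (lt_trans (blockSeq_vecLt b hxblock h a ha cc hcc) (hm2 cc hcc))
        · have hkn : k = n := le_antisymm hk h
          subst hkn
          exact Finset.mem_range.mpr (hm2 a ha)
      have hlen : n + 1 ≤ lo m := by
        obtain ⟨j', hj'⟩ := supp_nonempty b (hx0 n)
        have h1 := blockSeq_le_supp b hxblock n j' hj'
        have h2 := hm2 j' hj'
        omega
      have hσb : σ (hist y (n + 1)) ≤ hi m := by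
        refine hhib m _ ?_ ?_
        · simpa [hist] using hlen
        · intro v hv
          obtain ⟨i, rfl⟩ := List.mem_ofFn.mp hv
          exact hNetmono (hmst_le (i : ℕ) (Nat.lt_succ_iff.mp i.isLt)) _ (hyNet (i : ℕ))
      exact lt_of_le_of_lt hσb (hm3 j (hysupp (n + 1) hj))
  have hleg : ∀ i, y i ∈ X ∧ y i ≠ 0 ∧ NatLt b (σ (hist y i)) (y i) ∧
      VecLt b (y i) (y (i + 1)) := by
    intro i
    refine ⟨(hNetX _ _ (hyNet i)).1, (hNetX _ _ (hyNet i)).2, hsig i, ?_⟩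
    intro a ha cc hcc
    exact hxblock.2 i a (hysupp i ha) cc (hysupp (i + 1) hcc)
  have hyB := (hσ y hleg).2
  have hpc : prefCat ([] : List E) y = y := by
    funext n
    simp [prefCat]
  rw [hpc] at hyB
  exact ⟨y, hyB, hacc⟩
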